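/- Let x, y be uniform and independent on the weight-w sphere in F_2^n (w even), and fix a weight-v vector c. Then the conditional probability that |x ∧ y| = w/2, given |x ∧ c| = α and |y ∧ c| = α, equals [C(w, w/2) · C(n−w, w/2) / (C(v, α) · C(n−v, w−α) · C(w, α) · C(n−w, v−α))] · |W_{v,α}^n(x', y')|, where x', y' are arbitrary weight-w vectors with |x' + y'| = w. -/

import Mathlib

open Finset

namespace CondProbBucketAux

variable {n : ℕ}

lemma norm_filter (x : Fin n → ZMod 2) :
    hammingNorm x = (univ.filter fun i => x i ≠ 0).card := rfl

lemma zmod2_cases (a : ZMod 2) : a = 0 ∨ a = 1 := by revert a; decide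

lemma norm_comp (x : Fin n → ZMod 2) (σ : Equiv.Perm (Fin n)) :
    hammingNorm (x ∘ σ) = hammingNorm x := by
  rw [norm_filter, norm_filter]
  apply Finset.card_bij (fun i _ => σ i)
  · intro a ha; simp_all [Function.comp]
  · intro a _ b _ hab; exact σ.injective hab
  · intro b hb; exact ⟨σ.symm b, by simp_all [Function.comp], by simp⟩

lemma mul_comp (x y : Fin n → ZMod 2) (σ : Equiv.Perm (Fin n)) :
    (x ∘ σ) * (y ∘ σ) = (x * y) ∘ σ := by
  funext i; simp [Function.comp, Pi.mul_apply]

lemma exists_comp_eq {β : Type*} [DecidableEq β] [Fintype β] (f g : Fin n → β)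
    (h : ∀ b, (univ.filter fun i => f i = b).card = (univ.filter fun i => g i = b).card) :
    ∃ σ : Equiv.Perm (Fin n), g ∘ σ = f := by
  have e : ∀ b, {i : Fin n // f i = b} ≃ {i : Fin n // g i = b} := fun b =>
    Fintype.equivOfCardEq (by simp only [Fintype.card_subtype]; exact h b)
  refine ⟨(Equiv.sigmaFiberEquiv f).symm.trans
    ((Equiv.sigmaCongrRight e).trans (Equiv.sigmaFiberEquiv g)), ?_⟩
  funext i
  simp only [Function.comp, Equiv.trans_apply, Equiv.sigmaCongrRight_apply]
  have h1 : (Equiv.sigmaFiberEquiv f).symm i = ⟨f i, i, rfl⟩ := rfl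
  rw [h1]
  exact (e (f i) ⟨i, rfl⟩).2

lemma norm_add_rel (x y : Fin n → ZMod 2) :
    hammingNorm (x + y) + 2 * hammingNorm (x * y) = hammingNorm x + hammingNorm y := by
  have key : ∀ a b : ZMod 2,
      ((if a + b ≠ 0 then 1 else 0) + 2 * (if a * b ≠ 0 then 1 else 0) : ℕ)
        = (if a ≠ 0 then 1 else 0) + (if b ≠ 0 then 1 else 0) := by decide
  simp only [norm_filter, Finset.card_filter, Finset.mul_sum, ← Finset.sum_add_distrib]
  exact Finset.sum_congr rfl fun i _ => by
    simpa [Pi.add_apply, Pi.mul_apply] using key (x i) (y i)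

private def Nf (x y : Fin n → ZMod 2) (b : ZMod 2 × ZMod 2) : ℕ :=
  (univ.filter fun i => (x i, y i) = b).card

lemma Nf_11 (x y : Fin n → ZMod 2) : Nf x y (1, 1) = hammingNorm (x * y) := by
  have key : ∀ a b : ZMod 2,
      ((if (a, b) = ((1 : ZMod 2), (1 : ZMod 2)) then 1 else 0) : ℕ)
        = if a * b ≠ 0 then 1 else 0 := by decide
  simp only [Nf, norm_filter, Finset.card_filter]
  exact Finset.sum_congr rfl fun i _ => by simpa [Pi.mul_apply] using key (x i) (y i)

lemma Nf_x (x y : Fin n → ZMod 2) : Nf x y (1, 1) + Nf x y (1, 0) = hammingNorm x := by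
  have key : ∀ a b : ZMod 2,
      ((if (a, b) = ((1 : ZMod 2), (1 : ZMod 2)) then 1 else 0)
        + (if (a, b) = ((1 : ZMod 2), (0 : ZMod 2)) then 1 else 0) : ℕ)
        = if a ≠ 0 then 1 else 0 := by decide
  simp only [Nf, norm_filter, Finset.card_filter, ← Finset.sum_add_distrib]
  exact Finset.sum_congr rfl fun i _ => key (x i) (y i)

lemma Nf_y (x y : Fin n → ZMod 2) : Nf x y (1, 1) + Nf x y (0, 1) = hammingNorm y := by
  have key : ∀ a b : ZMod 2,
      ((if (a, b) = ((1 : ZMod 2), (1 : ZMod 2)) then 1 else 0)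
        + (if (a, b) = ((0 : ZMod 2), (1 : ZMod 2)) then 1 else 0) : ℕ)
        = if b ≠ 0 then 1 else 0 := by decide
  simp only [Nf, norm_filter, Finset.card_filter, ← Finset.sum_add_distrib]
  exact Finset.sum_congr rfl fun i _ => key (x i) (y i)

lemma Nf_total (x y : Fin n → ZMod 2) :
    Nf x y (1, 1) + Nf x y (1, 0) + Nf x y (0, 1) + Nf x y (0, 0) = n := by
  have key : ∀ a b : ZMod 2,
      ((if (a, b) = ((1 : ZMod 2), (1 : ZMod 2)) then 1 else 0)
        + (if (a, b) = ((1 : ZMod 2), (0 : ZMod 2)) then 1 else 0)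
        + (if (a, b) = ((0 : ZMod 2), (1 : ZMod 2)) then 1 else 0)
        + (if (a, b) = ((0 : ZMod 2), (0 : ZMod 2)) then 1 else 0) : ℕ) = 1 := by decide
  simp only [Nf, Finset.card_filter, ← Finset.sum_add_distrib]
  rw [Finset.sum_congr rfl fun i (_ : i ∈ univ) => key (x i) (y i)]
  simp

lemma exists_perm_pair (x₁ y₁ x₂ y₂ : Fin n → ZMod 2)
    (hx : hammingNorm x₁ = hammingNorm x₂) (hy : hammingNorm y₁ = hammingNorm y₂)
    (hxy : hammingNorm (x₁ * y₁) = hammingNorm (x₂ * y₂)) :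
    ∃ σ : Equiv.Perm (Fin n), x₂ ∘ σ = x₁ ∧ y₂ ∘ σ = y₁ := by
  have h11 : Nf x₁ y₁ (1,1) = Nf x₂ y₂ (1,1) := by rw [Nf_11, Nf_11, hxy]
  have h10 : Nf x₁ y₁ (1,0) = Nf x₂ y₂ (1,0) := by
    have a := Nf_x x₁ y₁; have b := Nf_x x₂ y₂; omega
  have h01 : Nf x₁ y₁ (0,1) = Nf x₂ y₂ (0,1) := by
    have a := Nf_y x₁ y₁; have b := Nf_y x₂ y₂; omega
  have h00 : Nf x₁ y₁ (0,0) = Nf x₂ y₂ (0,0) := by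
    have a := Nf_total x₁ y₁; have b := Nf_total x₂ y₂; omega
  have hclass : ∀ b : ZMod 2 × ZMod 2,
      b = (0,0) ∨ b = (0,1) ∨ b = (1,0) ∨ b = (1,1) := by decide
  obtain ⟨σ, hσ⟩ := exists_comp_eq (fun i => (x₁ i, y₁ i)) (fun i => (x₂ i, y₂ i))
    (fun b => by rcases hclass b with h|h|h|h <;> subst h <;> assumption)
  refine ⟨σ, ?_, ?_⟩ <;> funext i <;>
    · have h := congrFun hσ i
      simp only [Function.comp] at h ⊢
      first
        | exact congrArg Prod.fst h
        | exact congrArg Prod.snd h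

lemma exists_perm_single (c₁ c₂ : Fin n → ZMod 2)
    (h : hammingNorm c₁ = hammingNorm c₂) :
    ∃ σ : Equiv.Perm (Fin n), c₂ ∘ σ = c₁ := by
  have key1 : ∀ c : Fin n → ZMod 2,
      (univ.filter fun i => c i = 1).card = hammingNorm c := by
    intro c
    have key : ∀ a : ZMod 2, ((if a = 1 then 1 else 0) : ℕ) = if a ≠ 0 then 1 else 0 := by
      decide
    simp only [norm_filter, Finset.card_filter]
    exact Finset.sum_congr rfl fun i _ => key (c i)
  have key0 : ∀ c : Fin n → ZMod 2,
      (univ.filter fun i => c i = 0).card + (univ.filter fun i => c i = 1).card = n := by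
    intro c
    have key : ∀ a : ZMod 2,
        ((if a = 0 then 1 else 0) + (if a = 1 then 1 else 0) : ℕ) = 1 := by decide
    simp only [Finset.card_filter, ← Finset.sum_add_distrib]
    rw [Finset.sum_congr rfl fun i (_ : i ∈ univ) => key (c i)]
    simp
  apply exists_comp_eq
  intro b
  have hclass : ∀ b : ZMod 2, b = 0 ∨ b = 1 := by decide
  rcases hclass b with hb|hb <;> subst hb
  · have a1 := key1 c₁; have a2 := key1 c₂; have b1 := key0 c₁; have b2 := key0 c₂; omega
  · rw [key1, key1, h]

private def T (x : Fin n → ZMod 2) : Finset (Fin n) := univ.filter fun i => x i ≠ 0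

private def ind (A : Finset (Fin n)) : Fin n → ZMod 2 := fun k => if k ∈ A then 1 else 0

lemma T_ind (A : Finset (Fin n)) : T (ind A) = A := by
  ext k
  simp only [T, ind, mem_filter, mem_univ, true_and]
  by_cases h : k ∈ A <;> simp [h]

lemma norm_T (x : Fin n → ZMod 2) : hammingNorm x = (T x).card := rfl

lemma T_mul (x c : Fin n → ZMod 2) : T (x * c) = T x ∩ T c := by
  ext k; simp [T, Pi.mul_apply, mul_ne_zero_iff]

lemma ind_eq_of_T (x : Fin n → ZMod 2) : ind (T x) = x := by
  funext k
  rcases zmod2_cases (x k) with h|h <;> simp [ind, T, h]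

lemma count_inter (c : Fin n → ZMod 2) (w α : ℕ) (hαw : α ≤ w) :
    (univ.filter fun x : Fin n → ZMod 2 =>
        hammingNorm x = w ∧ hammingNorm (x * c) = α).card
      = (hammingNorm c).choose α * (n - hammingNorm c).choose (w - α) := by
  set S : Finset (Fin n) := T c with hS
  have hcard : (univ.filter fun x : Fin n → ZMod 2 =>
        hammingNorm x = w ∧ hammingNorm (x * c) = α).card
      = (Finset.powersetCard α S ×ˢ Finset.powersetCard (w - α) Sᶜ).card := by
    apply Finset.card_bij' (fun x _ => (T x ∩ S, T x \ S))
      (fun p _ => ind (p.1 ∪ p.2))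
    · intro x hx
      simp only [mem_filter, mem_univ, true_and] at hx
      obtain ⟨hxw, hxα⟩ := hx
      have h1 : (T x ∩ S).card = α := by
        rw [← hxα, norm_T, T_mul]
      have h2 : (T x).card = w := hxw
      have h3 : (T x ∩ S).card + (T x \ S).card = (T x).card :=
        Finset.card_inter_add_card_sdiff _ _
      simp only [Finset.mem_product, Finset.mem_powersetCard]
      refine ⟨⟨inter_subset_right, h1⟩, ?_, by omega⟩
      intro k hk
      simp only [mem_sdiff] at hk
      simp [Finset.mem_compl, hk.2]
    · intro p hp
      simp only [Finset.mem_product, Finset.mem_powersetCard] at hp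
      obtain ⟨⟨hA, hAc⟩, hB, hBc⟩ := hp
      have hdisj : Disjoint p.1 p.2 := by
        refine Finset.disjoint_left.mpr fun k hk1 hk2 => ?_
        exact (Finset.mem_compl.mp (hB hk2)) (hA hk1)
      have hT : T (ind (p.1 ∪ p.2)) = p.1 ∪ p.2 := T_ind _
      simp only [mem_filter, mem_univ, true_and]
      constructor
      · rw [norm_T, hT, Finset.card_union_of_disjoint hdisj, hAc, hBc]; omega
      · rw [norm_T, T_mul, hT, ← hS]
        have heq : (p.1 ∪ p.2) ∩ S = p.1 := by
          ext k
          simp only [Finset.mem_inter, Finset.mem_union]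
          constructor
          · rintro ⟨h1 | h1, h2⟩
            · exact h1
            · exact absurd h2 (Finset.mem_compl.mp (hB h1))
          · intro h; exact ⟨Or.inl h, hA h⟩
        rw [heq, hAc]
    · intro x _
      have huni : (T x ∩ S) ∪ (T x \ S) = T x := by
        rw [union_comm]; exact Finset.sdiff_union_inter _ _
      simp only [huni, ind_eq_of_T]
    · intro p hp
      simp only [Finset.mem_product, Finset.mem_powersetCard] at hp
      obtain ⟨⟨hA, _⟩, hB, _⟩ := hp
      have hT : T (ind (p.1 ∪ p.2)) = p.1 ∪ p.2 := T_ind _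
      have heq1 : (p.1 ∪ p.2) ∩ S = p.1 := by
        ext k
        simp only [Finset.mem_inter, Finset.mem_union]
        constructor
        · rintro ⟨h1 | h1, h2⟩
          · exact h1
          · exact absurd h2 (Finset.mem_compl.mp (hB h1))
        · intro h; exact ⟨Or.inl h, hA h⟩
      have heq2 : (p.1 ∪ p.2) \ S = p.2 := by
        ext k
        simp only [Finset.mem_sdiff, Finset.mem_union]
        constructor
        · rintro ⟨h1 | h1, h2⟩
          · exact absurd (hA h1) h2
          · exact h1
        · intro h; exact ⟨Or.inr h, Finset.mem_compl.mp (hB h)⟩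
      rw [hT, heq1, heq2]
  rw [hcard, Finset.card_product, Finset.card_powersetCard, Finset.card_powersetCard,
    Finset.card_compl]
  rw [hS, ← norm_T, Fintype.card_fin]

lemma sphere_card (w : ℕ) :
    (univ.filter fun x : Fin n → ZMod 2 => hammingNorm x = w).card = n.choose w := by
  have h := count_inter (n := n) 0 w 0 (Nat.zero_le w)
  simp only [mul_zero, hammingNorm_zero, Nat.choose_zero_right, one_mul, Nat.sub_zero,
    Nat.choose_self] at h
  rw [← h]
  congr 1
  apply Finset.filter_congr
  intro x _
  simp [hammingNorm_zero]

/-- composition equiv on functions -/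
def compPerm (σ : Equiv.Perm (Fin n)) : (Fin n → ZMod 2) ≃ (Fin n → ZMod 2) where
  toFun x := x ∘ σ
  invFun x := x ∘ σ.symm
  left_inv x := by funext i; simp
  right_inv x := by funext i; simp

def compPermPair (σ : Equiv.Perm (Fin n)) :
    ((Fin n → ZMod 2) × (Fin n → ZMod 2)) ≃ ((Fin n → ZMod 2) × (Fin n → ZMod 2)) where
  toFun p := (p.1 ∘ σ, p.2 ∘ σ)
  invFun p := (p.1 ∘ σ.symm, p.2 ∘ σ.symm)
  left_inv p := by ext i <;> simp
  right_inv p := by ext i <;> simp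

lemma card_filter_equiv {γ : Type*} [Fintype γ] [DecidableEq γ] (e : γ ≃ γ)
    (P Q : γ → Prop) [DecidablePred P] [DecidablePred Q] (h : ∀ a, P a ↔ Q (e a)) :
    (univ.filter P).card = (univ.filter Q).card := by
  apply Finset.card_bij (fun a _ => e a)
  · intro a ha
    simp only [mem_filter, mem_univ, true_and] at *
    exact (h a).mp ha
  · intro a _ b _ hab; exact e.injective hab
  · intro b hb
    refine ⟨e.symm b, ?_, by simp⟩
    simp only [mem_filter, mem_univ, true_and] at *
    exact (h (e.symm b)).mpr (by simpa using hb)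

lemma choose_swap (m a b : ℕ) (ha : a ≤ m) :
    m.choose a * (m - a).choose b = m.choose b * (m - b).choose a := by
  by_cases hab : a + b ≤ m
  · have h1 := Nat.choose_mul (n := m) (Nat.le_add_right a b)
    have h2 := Nat.choose_mul (n := m) (Nat.le_add_left b a)
    have e1 : a + b - a = b := by omega
    have e2 : a + b - b = a := by omega
    rw [e1] at h1
    rw [e2] at h2
    have hsymm := Nat.choose_symm (Nat.le_add_right a b)
    rw [Nat.add_sub_cancel_left] at hsymm
    rw [← h1, ← hsymm, h2]
  · have hb : m - a < b := by omega
    rw [Nat.choose_eq_zero_of_lt hb, mul_zero]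
    by_cases hbm : b ≤ m
    · have ha' : m - b < a := by omega
      rw [Nat.choose_eq_zero_of_lt ha', mul_zero]
    · rw [Nat.choose_eq_zero_of_lt (by omega), zero_mul]

lemma choose_identity (n w v α : ℕ) (hwn : w ≤ n) (hvn : v ≤ n) (hαw : α ≤ w) (hαv : α ≤ v) :
    n.choose w * w.choose α * (n - w).choose (v - α)
      = n.choose v * v.choose α * (n - v).choose (w - α) := by
  have e1 := Nat.choose_mul (n := n) hαw
  have e2 := Nat.choose_mul (n := n) hαv
  have e3 := choose_swap (n - α) (w - α) (v - α) (by omega)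
  have d1 : n - α - (w - α) = n - w := by omega
  have d2 : n - α - (v - α) = n - v := by omega
  rw [d1, d2] at e3
  calc n.choose w * w.choose α * (n - w).choose (v - α)
      = n.choose α * (n - α).choose (w - α) * (n - w).choose (v - α) := by rw [e1]
    _ = n.choose α * ((n - α).choose (w - α) * (n - w).choose (v - α)) := by ring
    _ = n.choose α * ((n - α).choose (v - α) * (n - v).choose (w - α)) := by rw [e3]
    _ = n.choose α * (n - α).choose (v - α) * (n - v).choose (w - α) := by ring
    _ = n.choose v * v.choose α * (n - v).choose (w - α) := by rw [← e2]

end CondProbBucketAux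

attribute [simp] CondProbBucketAux.compPerm CondProbBucketAux.compPermPair

namespace CondProbBucketAux

@[simp] lemma compPerm_apply (σ : Equiv.Perm (Fin n)) (x : Fin n → ZMod 2) :
    compPerm σ x = x ∘ σ := rfl

@[simp] lemma compPermPair_apply (σ : Equiv.Perm (Fin n))
    (p : (Fin n → ZMod 2) × (Fin n → ZMod 2)) :
    compPermPair σ p = (p.1 ∘ σ, p.2 ∘ σ) := rfl

end CondProbBucketAux

open CondProbBucketAux

/-- For `x, y` independent uniform on the weight-`w` sphere (`w` even) and a fixed
weight-`v` vector `c`, the conditional probability that `|x ∧ y| = w/2`, given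
`|x ∧ c| = α` and `|y ∧ c| = α`, equals
`[C(w,w/2)·C(n−w,w/2) / (C(v,α)·C(n−v,w−α)·C(w,α)·C(n−w,v−α))] · |W_{v,α}^n(x',y')|`
for arbitrary weight-`w` vectors `x', y'` with `|x' + y'| = w`. -/
theorem cond_prob_solution_given_bucket (n w v α : ℕ) (hw : Even w) (hwn : w ≤ n)
    (hαv : α ≤ v) (hvn : v ≤ n) (hαw : α ≤ w)
    (c : Fin n → ZMod 2) (hc : hammingNorm c = v)
    (x' y' : Fin n → ZMod 2) (hx' : hammingNorm x' = w) (hy' : hammingNorm y' = w)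
    (hxy' : hammingNorm (x' + y') = w) :
    ((Finset.univ.filter (fun p : (Fin n → ZMod 2) × (Fin n → ZMod 2) =>
        hammingNorm p.1 = w ∧ hammingNorm p.2 = w ∧
          hammingNorm (p.1 * c) = α ∧ hammingNorm (p.2 * c) = α ∧
          2 * hammingNorm (p.1 * p.2) = w)).card : ℚ)
      / ((Finset.univ.filter (fun p : (Fin n → ZMod 2) × (Fin n → ZMod 2) =>
        hammingNorm p.1 = w ∧ hammingNorm p.2 = w ∧
          hammingNorm (p.1 * c) = α ∧ hammingNorm (p.2 * c) = α)).card : ℚ)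
    = ((w.choose (w / 2) * (n - w).choose (w / 2) : ℚ)
          / ((v.choose α : ℚ) * ((n - v).choose (w - α) : ℚ)
              * (w.choose α : ℚ) * ((n - w).choose (v - α) : ℚ)))
        * ((Finset.univ.filter (fun c' : Fin n → ZMod 2 =>
            hammingNorm c' = v ∧ hammingNorm (x' * c') = α ∧
              hammingNorm (y' * c') = α)).card : ℚ) := by
  classical
  obtain ⟨k, hk⟩ := hw
  have h2w : 2 * hammingNorm (x' * y') = w := by
    have h := norm_add_rel x' y'
    rw [hx', hy', hxy'] at h
    omega
  set Ncard := (Finset.univ.filter (fun p : (Fin n → ZMod 2) × (Fin n → ZMod 2) =>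
        hammingNorm p.1 = w ∧ hammingNorm p.2 = w ∧
          hammingNorm (p.1 * c) = α ∧ hammingNorm (p.2 * c) = α ∧
          2 * hammingNorm (p.1 * p.2) = w)).card with hNcard
  set Dcard := (Finset.univ.filter (fun p : (Fin n → ZMod 2) × (Fin n → ZMod 2) =>
        hammingNorm p.1 = w ∧ hammingNorm p.2 = w ∧
          hammingNorm (p.1 * c) = α ∧ hammingNorm (p.2 * c) = α)).card with hDcard
  set Wcard := (Finset.univ.filter (fun c' : Fin n → ZMod 2 =>
            hammingNorm c' = v ∧ hammingNorm (x' * c') = α ∧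
              hammingNorm (y' * c') = α)).card with hWcard
  set SphV := Finset.univ.filter (fun c' : Fin n → ZMod 2 => hammingNorm c' = v) with hSphV
  set Pset := Finset.univ.filter (fun p : (Fin n → ZMod 2) × (Fin n → ZMod 2) =>
      hammingNorm p.1 = w ∧ hammingNorm p.2 = w ∧ 2 * hammingNorm (p.1 * p.2) = w) with hPset
  -- constancy over the sphere
  have const1 : ∀ c' ∈ SphV, (Pset.filter (fun p =>
      hammingNorm (p.1 * c') = α ∧ hammingNorm (p.2 * c') = α)).card = Ncard := by
    intro c' hc'
    have hv' : hammingNorm c' = v := by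
      rw [hSphV] at hc'
      simpa using hc'
    have heq : Pset.filter (fun p =>
        hammingNorm (p.1 * c') = α ∧ hammingNorm (p.2 * c') = α)
        = Finset.univ.filter (fun p : (Fin n → ZMod 2) × (Fin n → ZMod 2) =>
          hammingNorm p.1 = w ∧ hammingNorm p.2 = w ∧
          hammingNorm (p.1 * c') = α ∧ hammingNorm (p.2 * c') = α ∧
          2 * hammingNorm (p.1 * p.2) = w) := by
      rw [hPset, Finset.filter_filter]
      apply Finset.filter_congr
      intro p _
      constructor
      · rintro ⟨⟨a, b, e⟩, d, f⟩; exact ⟨a, b, d, f, e⟩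
      · rintro ⟨a, b, d, f, e⟩; exact ⟨⟨a, b, e⟩, d, f⟩
    rw [heq, hNcard]
    obtain ⟨σ, hσ⟩ := exists_perm_single c c' (by rw [hc, hv'])
    apply card_filter_equiv (compPermPair σ)
    intro p
    rw [← hσ]
    simp only [compPermPair_apply, mul_comp, norm_comp]
  -- constancy over pairs
  have const2 : ∀ p ∈ Pset, (SphV.filter (fun c' =>
      hammingNorm (p.1 * c') = α ∧ hammingNorm (p.2 * c') = α)).card = Wcard := by
    intro p hp
    have hp' : hammingNorm p.1 = w ∧ hammingNorm p.2 = w ∧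
        2 * hammingNorm (p.1 * p.2) = w := by
      rw [hPset] at hp
      simpa using hp
    have heq : SphV.filter (fun c' =>
        hammingNorm (p.1 * c') = α ∧ hammingNorm (p.2 * c') = α)
        = Finset.univ.filter (fun c' : Fin n → ZMod 2 =>
            hammingNorm c' = v ∧ hammingNorm (p.1 * c') = α ∧
              hammingNorm (p.2 * c') = α) := by
      rw [hSphV, Finset.filter_filter]
    rw [heq, hWcard]
    obtain ⟨σ, hσ1, hσ2⟩ := exists_perm_pair p.1 p.2 x' y'
      (by rw [hp'.1, hx']) (by rw [hp'.2.1, hy']) (by omega)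
    have hq1 : p.1 ∘ σ.symm = x' := by
      funext i
      have h := congrFun hσ1 (σ.symm i)
      simp only [Function.comp] at h ⊢
      rw [Equiv.apply_symm_apply] at h
      exact h.symm
    have hq2 : p.2 ∘ σ.symm = y' := by
      funext i
      have h := congrFun hσ2 (σ.symm i)
      simp only [Function.comp] at h ⊢
      rw [Equiv.apply_symm_apply] at h
      exact h.symm
    apply card_filter_equiv (compPerm σ.symm)
    intro a
    rw [← hq1, ← hq2]
    simp only [compPerm_apply, mul_comp, norm_comp]
  -- double counting
  have hswap : (∑ c' ∈ SphV, (Pset.filter (fun p =>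
        hammingNorm (p.1 * c') = α ∧ hammingNorm (p.2 * c') = α)).card)
      = ∑ p ∈ Pset, (SphV.filter (fun c' =>
        hammingNorm (p.1 * c') = α ∧ hammingNorm (p.2 * c') = α)).card := by
    simp only [Finset.card_filter]
    exact Finset.sum_comm
  have hsum1 : (∑ c' ∈ SphV, (Pset.filter (fun p =>
        hammingNorm (p.1 * c') = α ∧ hammingNorm (p.2 * c') = α)).card)
      = SphV.card * Ncard := by
    rw [Finset.sum_congr rfl const1, Finset.sum_const, smul_eq_mul]
  have hsum2 : (∑ p ∈ Pset, (SphV.filter (fun c' =>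
        hammingNorm (p.1 * c') = α ∧ hammingNorm (p.2 * c') = α)).card)
      = Pset.card * Wcard := by
    rw [Finset.sum_congr rfl const2, Finset.sum_const, smul_eq_mul]
  have hstar : SphV.card * Ncard = Pset.card * Wcard := by
    rw [← hsum1, hswap, hsum2]
  -- cardinalities
  have hSphVcard : SphV.card = n.choose v := by
    rw [hSphV]; exact sphere_card v
  have hPsetcard : Pset.card = n.choose w * (w.choose (w / 2) * (n - w).choose (w / 2)) := by
    rw [hPset, Finset.card_filter, Fintype.sum_prod_type]
    have hinner : ∀ x : Fin n → ZMod 2,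
        (∑ y : Fin n → ZMod 2, if hammingNorm x = w ∧ hammingNorm y = w ∧
            2 * hammingNorm (x * y) = w then 1 else 0)
          = if hammingNorm x = w then w.choose (w / 2) * (n - w).choose (w / 2) else 0 := by
      intro x
      by_cases hx : hammingNorm x = w
      · rw [if_pos hx]
        have hiff : ∀ y : Fin n → ZMod 2,
            (hammingNorm x = w ∧ hammingNorm y = w ∧ 2 * hammingNorm (x * y) = w)
              ↔ (hammingNorm y = w ∧ hammingNorm (y * x) = w / 2) := by
          intro y
          rw [mul_comm x y]
          constructor
          · rintro ⟨-, h1, h2⟩; exact ⟨h1, by omega⟩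
          · rintro ⟨h1, h2⟩; exact ⟨hx, h1, by omega⟩
        calc (∑ y : Fin n → ZMod 2, if hammingNorm x = w ∧ hammingNorm y = w ∧
                2 * hammingNorm (x * y) = w then 1 else 0)
            = ∑ y : Fin n → ZMod 2, if hammingNorm y = w ∧
                hammingNorm (y * x) = w / 2 then 1 else 0 :=
              Finset.sum_congr rfl fun y _ => if_congr (hiff y) rfl rfl
          _ = (Finset.univ.filter (fun y : Fin n → ZMod 2 =>
                hammingNorm y = w ∧ hammingNorm (y * x) = w / 2)).card :=
              (Finset.card_filter _ _).symm
          _ = w.choose (w / 2) * (n - w).choose (w / 2) := by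
              rw [count_inter x w (w / 2) (by omega), hx,
                show w - w / 2 = w / 2 by omega]
      · rw [if_neg hx]
        apply Finset.sum_eq_zero
        intro y _
        rw [if_neg (by tauto)]
    simp only [hinner]
    rw [← Finset.sum_filter, Finset.sum_const, smul_eq_mul, sphere_card]
  have hBcard : (Finset.univ.filter (fun x : Fin n → ZMod 2 =>
      hammingNorm x = w ∧ hammingNorm (x * c) = α)).card
        = v.choose α * (n - v).choose (w - α) := by
    rw [count_inter c w α hαw, hc]
  have hDval : Dcard = (v.choose α * (n - v).choose (w - α))
      * (v.choose α * (n - v).choose (w - α)) := by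
    rw [hDcard, Finset.card_filter, Fintype.sum_prod_type]
    have hsplit : ∀ x y : Fin n → ZMod 2,
        (if hammingNorm x = w ∧ hammingNorm y = w ∧
            hammingNorm (x * c) = α ∧ hammingNorm (y * c) = α then (1 : ℕ) else 0)
          = (if hammingNorm x = w ∧ hammingNorm (x * c) = α then 1 else 0)
            * (if hammingNorm y = w ∧ hammingNorm (y * c) = α then 1 else 0) := by
      intro x y
      by_cases h1 : hammingNorm x = w ∧ hammingNorm (x * c) = α
      · by_cases h2 : hammingNorm y = w ∧ hammingNorm (y * c) = α
        · rw [if_pos h1, if_pos h2, if_pos ⟨h1.1, h2.1, h1.2, h2.2⟩, mul_one]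
        · rw [if_neg h2, mul_zero, if_neg (by tauto)]
      · rw [if_neg h1, zero_mul, if_neg (by tauto)]
    simp only [hsplit]
    rw [← Finset.sum_mul_sum, ← Finset.card_filter, hBcard]
  have hstar' : n.choose v * Ncard
      = n.choose w * (w.choose (w / 2) * (n - w).choose (w / 2)) * Wcard := by
    rw [← hSphVcard, ← hPsetcard]
    exact hstar
  have hident := choose_identity n w v α hwn hvn hαw hαv
  -- final arithmetic
  by_cases hq2 : (n - v).choose (w - α) = 0
  · have hD0 : Dcard = 0 := by rw [hDval, hq2]; ring
    have hq2Q : ((n - v).choose (w - α) : ℚ) = 0 := by exact_mod_cast hq2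
    rw [hD0, hq2Q]
    simp
  · have hq1 : v.choose α ≠ 0 := (Nat.choose_pos hαv).ne'
    have hq3 : w.choose α ≠ 0 := (Nat.choose_pos hαw).ne'
    have hnv : n.choose v ≠ 0 := (Nat.choose_pos hvn).ne'
    have hrhs_ne : n.choose v * v.choose α * (n - v).choose (w - α) ≠ 0 := by
      positivity
    have hlhs_ne : n.choose w * w.choose α * (n - w).choose (v - α) ≠ 0 := by
      rw [hident]; exact hrhs_ne
    have hq4 : (n - w).choose (v - α) ≠ 0 := by
      intro h; apply hlhs_ne; rw [h, mul_zero]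
    have hq1Q : ((v.choose α : ℕ) : ℚ) ≠ 0 := Nat.cast_ne_zero.mpr hq1
    have hq2Q : (((n - v).choose (w - α) : ℕ) : ℚ) ≠ 0 := Nat.cast_ne_zero.mpr hq2
    have hq3Q : ((w.choose α : ℕ) : ℚ) ≠ 0 := Nat.cast_ne_zero.mpr hq3
    have hq4Q : (((n - w).choose (v - α) : ℕ) : ℚ) ≠ 0 := Nat.cast_ne_zero.mpr hq4
    have hDne : (Dcard : ℚ) ≠ 0 := by
      rw [hDval]
      push_cast
      exact mul_ne_zero (mul_ne_zero hq1Q hq2Q) (mul_ne_zero hq1Q hq2Q)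
    have hdenne : ((v.choose α : ℚ) * ((n - v).choose (w - α) : ℚ)
        * (w.choose α : ℚ) * ((n - w).choose (v - α) : ℚ)) ≠ 0 :=
      mul_ne_zero (mul_ne_zero (mul_ne_zero hq1Q hq2Q) hq3Q) hq4Q
    rw [div_mul_eq_mul_div, div_eq_div_iff hDne hdenne]
    have hDq : (Dcard : ℚ) = ((v.choose α : ℚ) * ((n - v).choose (w - α) : ℚ))
        * ((v.choose α : ℚ) * ((n - v).choose (w - α) : ℚ)) := by
      rw [hDval]; push_cast; ring
    rw [hDq]
    have hnvQ : ((n.choose v : ℕ) : ℚ) ≠ 0 := Nat.cast_ne_zero.mpr hnv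
    apply mul_left_cancel₀ hnvQ
    have F1 : ((n.choose v : ℕ) : ℚ) * Ncard
        = (n.choose w : ℚ) * ((w.choose (w / 2) : ℚ) * ((n - w).choose (w / 2) : ℚ))
          * Wcard := by exact_mod_cast hstar'
    have F2 : ((n.choose w : ℕ) : ℚ) * (w.choose α : ℚ) * ((n - w).choose (v - α) : ℚ)
        = (n.choose v : ℚ) * (v.choose α : ℚ) * ((n - v).choose (w - α) : ℚ) := by
      exact_mod_cast hident
    linear_combination ((v.choose α : ℚ) * ((n - v).choose (w - α) : ℚ)
        * (w.choose α : ℚ) * ((n - w).choose (v - α) : ℚ)) * F1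
      + ((w.choose (w / 2) : ℚ) * ((n - w).choose (w / 2) : ℚ) * (Wcard : ℚ)
        * (v.choose α : ℚ) * ((n - v).choose (w - α) : ℚ)) * F2
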